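/- For a, b > 0, consider f : ℝ² → ℝ², f(x) = (−3a²x₁ + x₁³ + x₂³, −3b²x₂ + x₁³ + x₂³). The Pareto critical set of f is exactly the ellipse {x ∈ ℝ² : x₁²/a² + x₂²/b² = 1}, and the KKT vector corresponding to a Pareto critical point x is α = (x₁²/a², x₂²/b²)ᵀ. -/

import Mathlib

open scoped BigOperators

noncomputable def ellF1 (a : ℝ) (y : EuclideanSpace ℝ (Fin 2)) : ℝ :=
  -3 * a ^ 2 * y 0 + (y 0) ^ 3 + (y 1) ^ 3

noncomputable def ellF2 (b : ℝ) (y : EuclideanSpace ℝ (Fin 2)) : ℝ :=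
  -3 * b ^ 2 * y 1 + (y 0) ^ 3 + (y 1) ^ 3

lemma ell_grad1 (a : ℝ) (x : EuclideanSpace ℝ (Fin 2)) :
    HasGradientAt (ellF1 a) (!₂[(-3*a^2 + 3*(x 0)^2), 3*(x 1)^2] : EuclideanSpace ℝ (Fin 2)) x := by
  rw [hasGradientAt_iff_hasFDerivAt]
  have p0 := (EuclideanSpace.proj (0 : Fin 2) (𝕜 := ℝ)).hasFDerivAt (x := x)
  have p1 := (EuclideanSpace.proj (1 : Fin 2) (𝕜 := ℝ)).hasFDerivAt (x := x)
  have h := ((p0.const_mul (-3*a^2)).add ((p0.mul p0).mul p0)).add ((p1.mul p1).mul p1)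
  have he : ellF1 a = fun y : EuclideanSpace ℝ (Fin 2) =>
      -3*a^2 * (EuclideanSpace.proj (0:Fin 2) (𝕜 := ℝ) y) +
        ((EuclideanSpace.proj (0:Fin 2) (𝕜 := ℝ) y) * (EuclideanSpace.proj (0:Fin 2) (𝕜 := ℝ) y)) * (EuclideanSpace.proj (0:Fin 2) (𝕜 := ℝ) y) +
        ((EuclideanSpace.proj (1:Fin 2) (𝕜 := ℝ) y) * (EuclideanSpace.proj (1:Fin 2) (𝕜 := ℝ) y)) * (EuclideanSpace.proj (1:Fin 2) (𝕜 := ℝ) y) := by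
    funext y; simp [ellF1]; ring
  rw [he]
  refine HasFDerivAt.congr_fderiv h ?_
  ext y
  simp [PiLp.inner_apply, Fin.sum_univ_two]
  ring

lemma ell_grad2 (b : ℝ) (x : EuclideanSpace ℝ (Fin 2)) :
    HasGradientAt (ellF2 b) (!₂[3*(x 0)^2, (-3*b^2 + 3*(x 1)^2)] : EuclideanSpace ℝ (Fin 2)) x := by
  rw [hasGradientAt_iff_hasFDerivAt]
  have p0 := (EuclideanSpace.proj (0 : Fin 2) (𝕜 := ℝ)).hasFDerivAt (x := x)
  have p1 := (EuclideanSpace.proj (1 : Fin 2) (𝕜 := ℝ)).hasFDerivAt (x := x)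
  have h := ((p1.const_mul (-3*b^2)).add ((p0.mul p0).mul p0)).add ((p1.mul p1).mul p1)
  have he : ellF2 b = fun y : EuclideanSpace ℝ (Fin 2) =>
      -3*b^2 * (EuclideanSpace.proj (1:Fin 2) (𝕜 := ℝ) y) +
        ((EuclideanSpace.proj (0:Fin 2) (𝕜 := ℝ) y) * (EuclideanSpace.proj (0:Fin 2) (𝕜 := ℝ) y)) * (EuclideanSpace.proj (0:Fin 2) (𝕜 := ℝ) y) +
        ((EuclideanSpace.proj (1:Fin 2) (𝕜 := ℝ) y) * (EuclideanSpace.proj (1:Fin 2) (𝕜 := ℝ) y)) * (EuclideanSpace.proj (1:Fin 2) (𝕜 := ℝ) y) := by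
    funext y; simp [ellF2]; ring
  rw [he]
  refine HasFDerivAt.congr_fderiv h ?_
  ext y
  simp [PiLp.inner_apply, Fin.sum_univ_two]
  ring

/-- For `a, b > 0` and `f(x) = (−3a²x₁+x₁³+x₂³, −3b²x₂+x₁³+x₂³)`, the Pareto
critical set is exactly the ellipse `x₁²/a² + x₂²/b² = 1`, with KKT vector
`α = (x₁²/a², x₂²/b²)`. -/
theorem paretoCritical_ellipse (a b : ℝ) (ha : 0 < a) (hb : 0 < b)
    (x : EuclideanSpace ℝ (Fin 2)) :
    ((∃ α : Fin 2 → ℝ, (∀ i, 0 ≤ α i) ∧ α 0 + α 1 = 1 ∧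
        α 0 • gradient (ellF1 a) x + α 1 • gradient (ellF2 b) x = 0) ↔
      (x 0) ^ 2 / a ^ 2 + (x 1) ^ 2 / b ^ 2 = 1) ∧
    (∀ α : Fin 2 → ℝ, (∀ i, 0 ≤ α i) → α 0 + α 1 = 1 →
      α 0 • gradient (ellF1 a) x + α 1 • gradient (ellF2 b) x = 0 →
      α 0 = (x 0) ^ 2 / a ^ 2 ∧ α 1 = (x 1) ^ 2 / b ^ 2) := by
  have hg1 : gradient (ellF1 a) x = (!₂[(-3*a^2 + 3*(x 0)^2), 3*(x 1)^2] : EuclideanSpace ℝ (Fin 2)) :=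
    (ell_grad1 a x).gradient
  have hg2 : gradient (ellF2 b) x = (!₂[3*(x 0)^2, (-3*b^2 + 3*(x 1)^2)] : EuclideanSpace ℝ (Fin 2)) :=
    (ell_grad2 b x).gradient
  have ha2 : a ^ 2 ≠ 0 := by positivity
  have hb2 : b ^ 2 ≠ 0 := by positivity
  have key : ∀ α : Fin 2 → ℝ, α 0 + α 1 = 1 →
      α 0 • gradient (ellF1 a) x + α 1 • gradient (ellF2 b) x = 0 →
      α 0 = (x 0) ^ 2 / a ^ 2 ∧ α 1 = (x 1) ^ 2 / b ^ 2 := by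
    intro α hsum hzero
    rw [hg1, hg2] at hzero
    have h0 : (α 0 • (!₂[(-3*a^2 + 3*(x 0)^2), 3*(x 1)^2] : EuclideanSpace ℝ (Fin 2))
        + α 1 • (!₂[3*(x 0)^2, (-3*b^2 + 3*(x 1)^2)] : EuclideanSpace ℝ (Fin 2))) 0 = 0 := by
      rw [hzero]; rfl
    have h1 : (α 0 • (!₂[(-3*a^2 + 3*(x 0)^2), 3*(x 1)^2] : EuclideanSpace ℝ (Fin 2))
        + α 1 • (!₂[3*(x 0)^2, (-3*b^2 + 3*(x 1)^2)] : EuclideanSpace ℝ (Fin 2))) 1 = 0 := by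
      rw [hzero]; rfl
    simp [PiLp.add_apply, PiLp.smul_apply, smul_eq_mul] at h0 h1
    constructor
    · field_simp
      nlinarith [h0, hsum]
    · field_simp
      nlinarith [h1, hsum]
  refine ⟨⟨?_, ?_⟩, fun α _ => key α⟩
  · rintro ⟨α, hnn, hsum, hzero⟩
    obtain ⟨e0, e1⟩ := key α hsum hzero
    rw [← e0, ← e1, hsum]
  · intro hell
    refine ⟨![(x 0)^2 / a^2, (x 1)^2 / b^2], ?_, ?_, ?_⟩
    · intro i
      fin_cases i <;> simp <;> positivity
    · simpa using hell
    · have hE : (x 0)^2 * b^2 + (x 1)^2 * a^2 = a^2 * b^2 := by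
        field_simp at hell; linarith
      rw [hg1, hg2]
      ext i
      fin_cases i
      · simp [PiLp.add_apply, PiLp.smul_apply, smul_eq_mul]
        field_simp
        linear_combination (3 * (x 0)^2) * hE
      · simp [PiLp.add_apply, PiLp.smul_apply, smul_eq_mul]
        field_simp
        linear_combination (3 * (x 1)^2) * hE
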